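/- Let X be an equiangular set of unit vectors in ℝ^r with common angle α, where r < 1/α². Then |X| ≤ r(1 − α²)/(1 − rα²). -/

import Mathlib

open Finset

theorem stmt_13 (r : ℕ) (α : ℝ) (hα0 : 0 ≤ α) (hα1 : α < 1)
    (X : Finset (EuclideanSpace ℝ (Fin r)))
    (hunit : ∀ x ∈ X, ‖x‖ = 1)
    (hangle : ∀ x ∈ X, ∀ y ∈ X, x ≠ y →
      (inner ℝ x y : ℝ) = α ∨ (inner ℝ x y : ℝ) = -α)
    (hr : (r : ℝ) < 1 / α ^ 2) :
    (X.card : ℝ) ≤ r * (1 - α ^ 2) / (1 - r * α ^ 2) := by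
  classical
  have hα : 0 < α := by
    rcases hα0.lt_or_eq with h | h
    · exact h
    · exfalso
      rw [← h] at hr
      norm_num at hr
      exact absurd hr (by positivity : (0:ℝ) ≤ (r:ℝ)).not_gt
  have hα2 : 0 < α ^ 2 := by positivity
  have hrα : (r : ℝ) * α ^ 2 < 1 := by
    rw [lt_div_iff₀ hα2] at hr; linarith
  -- flattened tensor
  set f : EuclideanSpace ℝ (Fin r) → EuclideanSpace ℝ (Fin r × Fin r) :=
    fun x => WithLp.toLp 2 (fun p : Fin r × Fin r => x p.1 * x p.2) with hf
  set e : EuclideanSpace ℝ (Fin r × Fin r) :=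
    WithLp.toLp 2 (fun p : Fin r × Fin r => if p.1 = p.2 then (1:ℝ) else 0) with he
  have hinner : ∀ x y : EuclideanSpace ℝ (Fin r),
      (inner ℝ (f x) (f y) : ℝ) = (inner ℝ x y : ℝ) ^ 2 := by
    intro x y
    simp only [PiLp.inner_apply, RCLike.inner_apply, conj_trivial, hf, PiLp.toLp_apply]
    rw [Fintype.sum_prod_type, sq, Finset.sum_mul_sum]
    exact Finset.sum_congr rfl fun i _ => Finset.sum_congr rfl fun j _ => by ring
  have hfe : ∀ x : EuclideanSpace ℝ (Fin r),
      (inner ℝ (f x) e : ℝ) = (inner ℝ x x : ℝ) := by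
    intro x
    simp only [PiLp.inner_apply, RCLike.inner_apply, conj_trivial, hf, he, PiLp.toLp_apply]
    rw [Fintype.sum_prod_type]
    simp [mul_ite]
  have hee : (inner ℝ e e : ℝ) = r := by
    simp only [PiLp.inner_apply, RCLike.inner_apply, conj_trivial, he, PiLp.toLp_apply]
    rw [Fintype.sum_prod_type]
    simp
  have hxx : ∀ x ∈ X, (inner ℝ x x : ℝ) = 1 := by
    intro x hx
    rw [real_inner_self_eq_norm_sq, hunit x hx]; norm_num
  set n : ℝ := (X.card : ℝ) with hn
  set S : EuclideanSpace ℝ (Fin r × Fin r) := ∑ x ∈ X, f x with hS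
  have hSe : (inner ℝ S e : ℝ) = n := by
    rw [hS, sum_inner]
    rw [Finset.sum_congr rfl (fun x hx => by rw [hfe, hxx x hx])]
    simp [hn]
  have hSS : (inner ℝ S S : ℝ) ≤ n + (n ^ 2 - n) * α ^ 2 := by
    rw [hS, sum_inner]
    have : ∀ x ∈ X, (inner ℝ (f x) (∑ y ∈ X, f y) : ℝ) = ∑ y ∈ X, (inner ℝ x y : ℝ) ^ 2 := by
      intro x hx
      rw [inner_sum]
      exact Finset.sum_congr rfl fun y hy => hinner x y
    rw [Finset.sum_congr rfl this]
    have hbound : ∀ x ∈ X, ∑ y ∈ X, (inner ℝ x y : ℝ) ^ 2 ≤ 1 + ((X.card : ℝ) - 1) * α ^ 2 := by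
      intro x hx
      rw [← Finset.sum_erase_add _ _ hx, hxx x hx]
      have : ∑ y ∈ X.erase x, (inner ℝ x y : ℝ) ^ 2 = ∑ y ∈ X.erase x, α ^ 2 := by
        apply Finset.sum_congr rfl
        intro y hy
        rcases hangle x hx y (Finset.mem_of_mem_erase hy) (fun h => (Finset.ne_of_mem_erase hy) h.symm) with h | h <;>
          rw [h] <;> ring
      rw [this, Finset.sum_const, Finset.card_erase_of_mem hx]
      have h1 : 1 ≤ X.card := Finset.card_pos.mpr ⟨x, hx⟩
      rw [nsmul_eq_mul]
      push_cast [h1]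
      linarith
    calc ∑ x ∈ X, ∑ y ∈ X, (inner ℝ x y : ℝ) ^ 2
        ≤ ∑ x ∈ X, (1 + ((X.card : ℝ) - 1) * α ^ 2) := Finset.sum_le_sum hbound
      _ = n + (n ^ 2 - n) * α ^ 2 := by rw [Finset.sum_const, nsmul_eq_mul]; rw [hn]; ring
  -- Cauchy-Schwarz
  have hcs := real_inner_mul_inner_self_le S e
  rw [hSe, hee] at hcs
  have hSSnn : (0:ℝ) ≤ inner ℝ S S := real_inner_self_nonneg
  have key : n * n ≤ (n + (n ^ 2 - n) * α ^ 2) * r := by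
    calc n * n ≤ (inner ℝ S S : ℝ) * r := hcs
      _ ≤ (n + (n ^ 2 - n) * α ^ 2) * r := by
          apply mul_le_mul_of_nonneg_right hSS (by positivity)
  have hpos : 0 < 1 - (r:ℝ) * α ^ 2 := by linarith
  rw [le_div_iff₀ hpos]
  have hn0 : 0 ≤ n := by positivity
  rcases hn0.lt_or_eq with h | h
  · nlinarith [key, h, hpos]
  · rw [← h]
    have h1 : (0:ℝ) ≤ (r:ℝ) := Nat.cast_nonneg r
    have h2 : α ^ 2 < 1 := by nlinarith
    nlinarith
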